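/- Fix real numbers q > 1 and θ ≥ 0. Then lim_{N→∞} (1/N) · ln( ∑_{k=0}^{N} C(N,k) · (1 + (q−1)θk)^{−1/(q−1)} ) = ln 2. In other words, at fixed q and θ the free entropy density of the q-exponential Erdős–Rényi model converges to the value ln 2 = H_b(1/2) of the unbiased random graph with link probability 1/2, independently of q and θ. -/

import Mathlib

open Finset Filter

lemma log_lin_div_tendsto (c : ℝ) (hc : 0 ≤ c) :
    Tendsto (fun N : ℕ => Real.log (1 + c * N) / N) atTop (nhds 0) := by
  rcases hc.eq_or_lt with h | h
  · simp [← h]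
  · have ht : Tendsto (fun N : ℕ => 1 + c * (N : ℝ)) atTop atTop :=
      tendsto_atTop_add_const_left _ 1
        (Tendsto.const_mul_atTop h tendsto_natCast_atTop_atTop)
    have h1 : (fun N : ℕ => Real.log (1 + c * N)) =o[atTop] (fun N : ℕ => 1 + c * (N : ℝ)) :=
      Real.isLittleO_log_id_atTop.comp_tendsto ht
    have h2 : (fun N : ℕ => 1 + c * (N : ℝ)) =O[atTop] (fun N : ℕ => (N : ℝ)) := by
      apply Asymptotics.IsBigO.of_bound (1 + c)
      filter_upwards [eventually_ge_atTop 1] with N hN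
      have hN1 : (1 : ℝ) ≤ N := by exact_mod_cast hN
      rw [Real.norm_eq_abs, Real.norm_eq_abs,
        abs_of_nonneg (by positivity : (0:ℝ) ≤ 1 + c * N),
        abs_of_nonneg (by positivity : (0:ℝ) ≤ (N:ℝ))]
      nlinarith [mul_nonneg hc (le_trans zero_le_one hN1)]
    exact (h1.trans_isBigO h2).tendsto_div_nhds_zero

theorem qER_free_entropy_degeneracy (q θ : ℝ) (hq : 1 < q) (hθ : 0 ≤ θ) :
    Tendsto (fun N : ℕ =>
        Real.log (∑ k ∈ range (N + 1),
          (N.choose k : ℝ) * (1 + (q - 1) * θ * (k : ℝ)) ^ (-(1 : ℝ) / (q - 1))) / (N : ℝ))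
      atTop (nhds (Real.log 2)) := by
  set c := (q - 1) * θ with hc
  have hq1 : (0:ℝ) < q - 1 := by linarith
  have hc0 : 0 ≤ c := mul_nonneg hq1.le hθ
  set e : ℝ := -(1 : ℝ) / (q - 1) with he
  have he0 : e ≤ 0 := by
    rw [he]
    apply div_nonpos_of_nonpos_of_nonneg <;> linarith
  have hlow : Tendsto (fun N : ℕ => Real.log 2 + e * (Real.log (1 + c * N) / N)) atTop
      (nhds (Real.log 2)) := by
    have := (log_lin_div_tendsto c hc0).const_mul e
    simpa using tendsto_const_nhds.add this
  have common : ∀ N : ℕ, 1 ≤ N →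
      ((0:ℝ) < ∑ k ∈ range (N + 1), (N.choose k : ℝ) * (1 + c * k) ^ e) ∧
      ((2:ℝ) ^ N * (1 + c * N) ^ e ≤ ∑ k ∈ range (N + 1), (N.choose k : ℝ) * (1 + c * k) ^ e) ∧
      (∑ k ∈ range (N + 1), (N.choose k : ℝ) * (1 + c * k) ^ e ≤ (2:ℝ) ^ N) := by
    intro N hN
    have hNpos : (0:ℝ) < N := by exact_mod_cast hN
    have hbase : ∀ k ∈ range (N + 1), (0:ℝ) < 1 + c * k := by
      intro k hk
      have : (0:ℝ) ≤ c * k := mul_nonneg hc0 (Nat.cast_nonneg k)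
      linarith
    have hbN : (0:ℝ) < 1 + c * N := by
      have : (0:ℝ) ≤ c * N := mul_nonneg hc0 (Nat.cast_nonneg N)
      linarith
    have hterm : ∀ k ∈ range (N + 1),
        (N.choose k : ℝ) * (1 + c * N) ^ e ≤ (N.choose k : ℝ) * (1 + c * k) ^ e := by
      intro k hk
      refine mul_le_mul_of_nonneg_left ?_ (Nat.cast_nonneg _)
      refine Real.rpow_le_rpow_of_nonpos (hbase k hk) ?_ he0
      have hkN : (k : ℝ) ≤ N := by
        exact_mod_cast Nat.le_of_lt_succ (mem_range.1 hk)
      nlinarith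
    have hsumlow : (2:ℝ) ^ N * (1 + c * N) ^ e ≤
        ∑ k ∈ range (N + 1), (N.choose k : ℝ) * (1 + c * k) ^ e := by
      calc (2:ℝ) ^ N * (1 + c * N) ^ e
          = ∑ k ∈ range (N + 1), (N.choose k : ℝ) * (1 + c * N) ^ e := by
            rw [← Finset.sum_mul]
            norm_cast
            rw [Nat.sum_range_choose]
        _ ≤ _ := Finset.sum_le_sum hterm
    have hlowpos : (0:ℝ) < (2:ℝ) ^ N * (1 + c * N) ^ e :=
      mul_pos (by positivity) (Real.rpow_pos_of_pos hbN e)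
    have hsumpos : (0:ℝ) < ∑ k ∈ range (N + 1), (N.choose k : ℝ) * (1 + c * k) ^ e :=
      lt_of_lt_of_le hlowpos hsumlow
    have hsumhi : ∑ k ∈ range (N + 1), (N.choose k : ℝ) * (1 + c * k) ^ e ≤ (2:ℝ) ^ N := by
      calc ∑ k ∈ range (N + 1), (N.choose k : ℝ) * (1 + c * k) ^ e
          ≤ ∑ k ∈ range (N + 1), (N.choose k : ℝ) * 1 := by
            refine Finset.sum_le_sum fun k hk => ?_
            refine mul_le_mul_of_nonneg_left ?_ (Nat.cast_nonneg _)
            refine Real.rpow_le_one_of_one_le_of_nonpos ?_ he0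
            have : (0:ℝ) ≤ c * k := mul_nonneg hc0 (Nat.cast_nonneg k)
            linarith
        _ = (2:ℝ) ^ N := by
            simp only [mul_one]
            norm_cast
            exact Nat.sum_range_choose N
    exact ⟨hsumpos, hsumlow, hsumhi⟩
  refine tendsto_of_tendsto_of_tendsto_of_le_of_le' hlow tendsto_const_nhds ?_ ?_
  · filter_upwards [eventually_ge_atTop 1] with N hN
    obtain ⟨hsumpos, hsumlow, hsumhi⟩ := common N hN
    have hNpos : (0:ℝ) < N := by exact_mod_cast hN
    have hbN : (0:ℝ) < 1 + c * N := by
      have : (0:ℝ) ≤ c * N := mul_nonneg hc0 (Nat.cast_nonneg N)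
      linarith
    have hlowpos : (0:ℝ) < (2:ℝ) ^ N * (1 + c * N) ^ e :=
      mul_pos (by positivity) (Real.rpow_pos_of_pos hbN e)
    have hloglow : Real.log ((2:ℝ) ^ N * (1 + c * N) ^ e) ≤
          Real.log (∑ k ∈ range (N + 1), (N.choose k : ℝ) * (1 + c * k) ^ e) :=
        Real.log_le_log hlowpos hsumlow
    have hexp : Real.log ((2:ℝ) ^ N * (1 + c * N) ^ e)
          = N * Real.log 2 + e * Real.log (1 + c * N) := by
        rw [Real.log_mul (by positivity) (ne_of_gt (Real.rpow_pos_of_pos hbN e)),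
          Real.log_pow, Real.log_rpow hbN]
    rw [hexp] at hloglow
    have key : Real.log 2 + e * (Real.log (1 + c * N) / N)
          = ((N:ℝ) * Real.log 2 + e * Real.log (1 + c * N)) / N := by
        field_simp
    rw [key]
    gcongr
  · filter_upwards [eventually_ge_atTop 1] with N hN
    obtain ⟨hsumpos, hsumlow, hsumhi⟩ := common N hN
    have hNpos : (0:ℝ) < N := by exact_mod_cast hN
    have hloghi : Real.log (∑ k ∈ range (N + 1), (N.choose k : ℝ) * (1 + c * k) ^ e)
          ≤ (N:ℝ) * Real.log 2 := by
        have := Real.log_le_log hsumpos hsumhi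
        rwa [Real.log_pow] at this
    calc Real.log (∑ k ∈ range (N + 1), (N.choose k : ℝ) * (1 + c * k) ^ e) / N
          ≤ ((N:ℝ) * Real.log 2) / N := by gcongr
      _ = Real.log 2 := by field_simp
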